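/- Let (e, φ) be a non-abelian cocycle with respect to (G, N, ψ) such that both e : G × G → N and φ : G → Aut(N) have finite image. Then the extension 1 → N → E(e,φ) → G → 1 is bounded: the section σ(g) = (1,g) is a quasihomomorphism and the induced map G → Aut(N) has finite image. -/

import Mathlib

/-- If (e,φ) is a non-abelian cocycle with respect to (G,N,ψ) and both e and φ
have finite image, then the extension 1 → N → E(e,φ) → G → 1 is bounded: the
section σ(g) = (1,g) is a quasihomomorphism (its defect set, described via the
multiplication m of E(e,φ), is finite) and the map to Aut(N) it induces by
conjugation, namely φ, has finite image. -/
theorem stmt16 {G N : Type*} [Group G] [Group N]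
    (φ : G → MulAut N) (e : G → G → N)
    (hψ : ∀ g h : G, ∃ m : N, ∀ n : N, φ (g * h) n = m * φ g (φ h n) * m⁻¹)
    (hφ1 : φ 1 = 1) (he1 : ∀ g : G, e 1 g = 1 ∧ e g 1 = 1)
    (hconj : ∀ g h : G, ∀ n : N, e g h * n * (e g h)⁻¹ = φ g (φ h ((φ (g * h))⁻¹ n)))
    (hcoc : ∀ g h i : G, φ g (e h i) * e g (h * i) = e g h * e (g * h) i)
    (hefin : Set.Finite (Set.range (fun p : G × G => e p.1 p.2)))
    (hφfin : Set.Finite (Set.range φ))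
    (m : N × G → N × G → N × G)
    (hm : ∀ p q : N × G, m p q = (p.1 * φ p.2 q.1 * e p.2 q.2, p.2 * q.2)) :
    -- σ : g ↦ (1,g) is a section of the projection
    (∀ g : G, (((1 : N), g) : N × G).2 = g) ∧
    -- σ is a quasihomomorphism: its defect set is finite
    Set.Finite {p : N × G | ∃ g h : G,
      m ((1 : N), g) ((1 : N), h) = m p ((1 : N), g * h)} ∧
    -- conjugation by σ(g) induces φ(g) on N, and this map has finite image
    (∀ (g : G) (n : N), m ((1 : N), g) (n, 1) = m (φ g n, 1) ((1 : N), g)) ∧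
    Set.Finite (Set.range (fun g : G => fun n : N => φ g n)) := by
  refine ⟨fun g => rfl, ?_, ?_, ?_⟩
  · apply Set.Finite.subset
      ((hefin.prod (Set.finite_singleton (1 : G))))
    rintro ⟨n, x⟩ ⟨g, h, hp⟩
    rw [hm, hm] at hp
    simp only [Prod.mk.injEq, map_one, mul_one, one_mul] at hp
    obtain ⟨h1, h2⟩ := hp
    have hx : x = 1 := right_eq_mul.mp h2
    subst hx
    rw [(he1 (g*h)).1, mul_one] at h1
    exact ⟨⟨(g, h), h1⟩, rfl⟩
  · intro g n
    rw [hm, hm]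
    simp [hφ1, (he1 g).1, (he1 g).2]
  · have : Set.range (fun g : G => fun n : N => φ g n)
        ⊆ (fun f : MulAut N => (f : N → N)) '' Set.range φ := by
      rintro _ ⟨g, rfl⟩
      exact ⟨φ g, ⟨g, rfl⟩, rfl⟩
    exact (hφfin.image _).subset this
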